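/- arXiv:0912.4045 — 4 statements merged into one kernel-verified Lean document; each statement's English description precedes it below -/
import Mathlib

section
/- Let δ ∈ ℝ^p satisfy ‖δ_{T₀ᶜ}‖₁ ≤ k₀‖δ_{T₀}‖₁, where T₀ is the set of indices of the s largest coordinates of δ in absolute value. Decompose T₀ᶜ into blocks T₁, T₂, … of size s (the last possibly smaller), where T₁ holds the s largest coordinates of δ_{T₀ᶜ} in absolute value, T₂ the next s largest, and so on. Then Σ_{k≥1} ‖δ_{T_k}‖₂ ≤ s^{-1/2}‖δ‖₁ ≤ (k₀+1)‖δ_{T₀}‖₂. -/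
open Finset

noncomputable def l1 {p : ℕ} (v : Fin p → ℝ) : ℝ := ∑ i, |v i|
noncomputable def l2 {p : ℕ} (v : Fin p → ℝ) : ℝ := Real.sqrt (∑ i, (v i) ^ 2)

def restr {p : ℕ} (T : Finset (Fin p)) (v : Fin p → ℝ) : Fin p → ℝ :=
  fun i => if i ∈ T then v i else 0

lemma l1_restr {p : ℕ} (T : Finset (Fin p)) (v : Fin p → ℝ) :
    l1 (restr T v) = ∑ i ∈ T, |v i| := by
  simp [l1, restr, apply_ite abs, Finset.sum_ite_mem]

lemma l2_restr {p : ℕ} (T : Finset (Fin p)) (v : Fin p → ℝ) :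
    l2 (restr T v) = Real.sqrt (∑ i ∈ T, (v i) ^ 2) := by
  have h : ∀ i, (restr T v i) ^ 2 = if i ∈ T then v i ^ 2 else 0 := by
    intro i; unfold restr; split <;> simp
  unfold l2
  rw [show (∑ i, (restr T v i) ^ 2) = ∑ i, (if i ∈ T then v i ^ 2 else 0) from
    Finset.sum_congr rfl fun i _ => h i, Finset.sum_ite_mem, Finset.univ_inter]

lemma l1_nonneg {p : ℕ} (v : Fin p → ℝ) : 0 ≤ l1 v :=
  Finset.sum_nonneg fun i _ => abs_nonneg _

lemma blockBound {p s : ℕ} (hs : 1 ≤ s) (δ : Fin p → ℝ) (Tp Tc : Finset (Fin p))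
    (hTp : Tp.card = s) (hTc : Tc.card ≤ s)
    (hm : ∀ i ∈ Tp, ∀ j ∈ Tc, |δ j| ≤ |δ i|) :
    l2 (restr Tc δ) ≤ (Real.sqrt s)⁻¹ * l1 (restr Tp δ) := by
  have hspos : (0:ℝ) < s := by exact_mod_cast hs
  set L := l1 (restr Tp δ) with hL
  have hLnn : 0 ≤ L := l1_nonneg _
  set M := L / s with hM
  have hMnn : 0 ≤ M := div_nonneg hLnn hspos.le
  have hbound : ∀ j ∈ Tc, |δ j| ≤ M := by
    intro j hj
    have h1 : (s:ℝ) * |δ j| ≤ ∑ i ∈ Tp, |δ i| := by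
      calc (s:ℝ) * |δ j| = ∑ _i ∈ Tp, |δ j| := by
            rw [Finset.sum_const, hTp, nsmul_eq_mul]
        _ ≤ ∑ i ∈ Tp, |δ i| := Finset.sum_le_sum (fun i hi => hm i hi j hj)
    rw [hM, hL, l1_restr, le_div_iff₀ hspos]
    linarith
  have h2 : ∑ i ∈ Tc, δ i ^ 2 ≤ s * M ^ 2 := by
    calc ∑ i ∈ Tc, δ i ^ 2 ≤ ∑ _i ∈ Tc, M ^ 2 := by
          refine Finset.sum_le_sum fun i hi => ?_
          have h3 := hbound i hi
          nlinarith [abs_nonneg (δ i), sq_abs (δ i)]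
      _ = Tc.card * M ^ 2 := by rw [Finset.sum_const, nsmul_eq_mul]
      _ ≤ s * M ^ 2 := by
          have : (Tc.card : ℝ) ≤ s := by exact_mod_cast hTc
          nlinarith
  have hss : Real.sqrt s * Real.sqrt s = s := Real.mul_self_sqrt hspos.le
  have hsq : (0:ℝ) < Real.sqrt s := Real.sqrt_pos.mpr hspos
  calc l2 (restr Tc δ) = Real.sqrt (∑ i ∈ Tc, (δ i) ^ 2) := l2_restr _ _
    _ ≤ Real.sqrt (s * M ^ 2) := Real.sqrt_le_sqrt h2
    _ = Real.sqrt s * M := by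
        rw [Real.sqrt_mul hspos.le, Real.sqrt_sq hMnn]
    _ = (Real.sqrt s)⁻¹ * L := by
        rw [hM]; field_simp; nlinarith

/-- block decomposition bound
Σ_{k≥1} ‖δ_{T_k}‖₂ ≤ s^{-1/2}‖δ‖₁ ≤ (k₀+1)‖δ_{T₀}‖₂. -/
theorem stmt1 (p s K : ℕ) (k0 : ℝ) (hs : 1 ≤ s) (hsp : 2 * s ≤ p) (hk0 : 0 < k0)
    (δ : Fin p → ℝ)
    (T : ℕ → Finset (Fin p))
    -- the blocks partition {1,…,p}
    (hdisj : ∀ k l, k ≠ l → Disjoint (T k) (T l))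
    (hunion : (Finset.range (K + 1)).biUnion T = Finset.univ)
    -- T₀ holds the s largest coordinates of δ in absolute value
    (hT0card : (T 0).card = s)
    -- blocks of size s (the last possibly smaller), greedily ordered by decreasing |δ_i|
    (hcard : ∀ k, 1 ≤ k → k < K → (T k).card = s)
    (hcardK : (T K).card ≤ s)
    (hmono : ∀ k l, k < l → ∀ i ∈ T k, ∀ j ∈ T l, |δ j| ≤ |δ i|)
    -- the cone condition w.r.t. T₀
    (hcone : l1 (restr (T 0)ᶜ δ) ≤ k0 * l1 (restr (T 0) δ)) :
    ∑ k ∈ Finset.Icc 1 K, l2 (restr (T k) δ) ≤ (Real.sqrt s)⁻¹ * l1 δ ∧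
      (Real.sqrt s)⁻¹ * l1 δ ≤ (k0 + 1) * l2 (restr (T 0) δ) := by
  have hspos : (0:ℝ) < s := by exact_mod_cast hs
  have hsq : (0:ℝ) < Real.sqrt s := Real.sqrt_pos.mpr hspos
  have hss : Real.sqrt s * Real.sqrt s = s := Real.mul_self_sqrt hspos.le
  -- total l1 splits over blocks
  have hsplit : l1 δ = ∑ k ∈ Finset.range (K + 1), l1 (restr (T k) δ) := by
    have hpd : (↑(Finset.range (K + 1)) : Set ℕ).PairwiseDisjoint T := by
      intro a _ b _ hab
      exact hdisj a b hab
    calc l1 δ = ∑ i ∈ (Finset.range (K + 1)).biUnion T, |δ i| := by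
          rw [hunion]; rfl
      _ = ∑ k ∈ Finset.range (K + 1), ∑ i ∈ T k, |δ i| := Finset.sum_biUnion hpd
      _ = ∑ k ∈ Finset.range (K + 1), l1 (restr (T k) δ) := by
          exact Finset.sum_congr rfl fun k _ => (l1_restr _ _).symm
  constructor
  · -- first inequality
    have step : ∀ k ∈ Finset.Icc 1 K,
        l2 (restr (T k) δ) ≤ (Real.sqrt s)⁻¹ * l1 (restr (T (k - 1)) δ) := by
      intro k hk
      rw [Finset.mem_Icc] at hk
      obtain ⟨hk1, hkK⟩ := hk
      apply blockBound hs
      · rcases Nat.eq_or_lt_of_le hk1 with h | h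
        · rw [← h]; simpa using hT0card
        · rcases Nat.eq_zero_or_pos (k - 1) with h0 | h0
          · rw [h0]; exact hT0card
          · exact hcard _ h0 (by omega)
      · rcases Nat.eq_or_lt_of_le hkK with h | h
        · rw [h]; exact hcardK
        · exact le_of_eq (hcard _ hk1 h)
      · exact hmono (k - 1) k (by omega)
    calc ∑ k ∈ Finset.Icc 1 K, l2 (restr (T k) δ)
        ≤ ∑ k ∈ Finset.Icc 1 K, (Real.sqrt s)⁻¹ * l1 (restr (T (k - 1)) δ) :=
          Finset.sum_le_sum step
      _ = (Real.sqrt s)⁻¹ * ∑ k ∈ Finset.Icc 1 K, l1 (restr (T (k - 1)) δ) := by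
          rw [Finset.mul_sum]
      _ = (Real.sqrt s)⁻¹ * ∑ k ∈ Finset.range K, l1 (restr (T k) δ) := by
          congr 1
          have himg : Finset.Icc 1 K = (Finset.range K).image (· + 1) := by
            ext a; simp only [Finset.mem_Icc, Finset.mem_image, Finset.mem_range]
            constructor
            · intro ⟨h1, h2⟩; exact ⟨a - 1, by omega, by omega⟩
            · rintro ⟨b, hb, rfl⟩; omega
          rw [himg, Finset.sum_image (fun a _ b _ h => by omega)]
          simp
      _ ≤ (Real.sqrt s)⁻¹ * ∑ k ∈ Finset.range (K + 1), l1 (restr (T k) δ) := by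
          apply mul_le_mul_of_nonneg_left _ (by positivity)
          apply Finset.sum_le_sum_of_subset_of_nonneg
            (Finset.range_subset_range.mpr (by omega))
          intro i _ _; exact l1_nonneg _
      _ = (Real.sqrt s)⁻¹ * l1 δ := by rw [← hsplit]
  · -- second inequality
    have hdecomp : l1 δ = l1 (restr (T 0) δ) + l1 (restr (T 0)ᶜ δ) := by
      rw [l1_restr, l1_restr, l1]
      rw [← Finset.sum_add_sum_compl (T 0)]
    have hCS : l1 (restr (T 0) δ) ≤ Real.sqrt s * l2 (restr (T 0) δ) := by
      rw [l1_restr, l2_restr]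
      have h1 : (∑ i ∈ T 0, |δ i|) ^ 2 ≤ (s : ℝ) * ∑ i ∈ T 0, δ i ^ 2 := by
        have h := Finset.sum_mul_sq_le_sq_mul_sq (T 0) (fun _ => (1:ℝ)) (fun i => |δ i|)
        simp only [one_mul, one_pow, Finset.sum_const, nsmul_eq_mul, mul_one, hT0card,
          sq_abs] at h
        exact h
      have h2 : 0 ≤ ∑ i ∈ T 0, |δ i| := Finset.sum_nonneg fun i _ => abs_nonneg _
      calc ∑ i ∈ T 0, |δ i| = Real.sqrt ((∑ i ∈ T 0, |δ i|) ^ 2) :=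
            (Real.sqrt_sq h2).symm
        _ ≤ Real.sqrt ((s : ℝ) * ∑ i ∈ T 0, δ i ^ 2) := Real.sqrt_le_sqrt h1
        _ = Real.sqrt s * Real.sqrt (∑ i ∈ T 0, δ i ^ 2) := Real.sqrt_mul hspos.le _
    have hl2nn : 0 ≤ l2 (restr (T 0) δ) := Real.sqrt_nonneg _
    have key : l1 δ ≤ (k0 + 1) * Real.sqrt s * l2 (restr (T 0) δ) := by
      calc l1 δ = l1 (restr (T 0) δ) + l1 (restr (T 0)ᶜ δ) := hdecomp
        _ ≤ l1 (restr (T 0) δ) + k0 * l1 (restr (T 0) δ) := by linarith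
        _ = (k0 + 1) * l1 (restr (T 0) δ) := by ring
        _ ≤ (k0 + 1) * (Real.sqrt s * l2 (restr (T 0) δ)) := by
            apply mul_le_mul_of_nonneg_left hCS (by linarith)
        _ = (k0 + 1) * Real.sqrt s * l2 (restr (T 0) δ) := by ring
    rw [inv_mul_le_iff₀ hsq]
    calc l1 δ ≤ (k0 + 1) * Real.sqrt s * l2 (restr (T 0) δ) := key
      _ = Real.sqrt s * ((k0 + 1) * l2 (restr (T 0) δ)) := by ring
end

section
/- Let δ ∈ ℝ^p satisfy ‖δ_{T₀ᶜ}‖₁ ≤ k₀‖δ_{T₀}‖₁ where T₀ indexes the s largest coordinates of δ in absolute value. Then ‖δ‖₂ ≤ ‖δ_{T₀}‖₂ + s^{-1/2}‖δ‖₁ ≤ (k₀+2)‖δ_{T₀}‖₂. -/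
open Finset

lemma sqrt_add_le' (a b : ℝ) (ha : 0 ≤ a) (hb : 0 ≤ b) :
    Real.sqrt (a + b) ≤ Real.sqrt a + Real.sqrt b := by
  rw [show a + b = Real.sqrt a ^ 2 + Real.sqrt b ^ 2 by
    rw [Real.sq_sqrt ha, Real.sq_sqrt hb]]
  have h : Real.sqrt a ^ 2 + Real.sqrt b ^ 2 ≤ (Real.sqrt a + Real.sqrt b) ^ 2 := by
    nlinarith [Real.sqrt_nonneg a, Real.sqrt_nonneg b]
  calc Real.sqrt (Real.sqrt a ^ 2 + Real.sqrt b ^ 2)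
      ≤ Real.sqrt ((Real.sqrt a + Real.sqrt b) ^ 2) := Real.sqrt_le_sqrt h
    _ = Real.sqrt a + Real.sqrt b := Real.sqrt_sq (by positivity)

/-- ‖δ‖₂ ≤ ‖δ_{T₀}‖₂ + s^{-1/2}‖δ‖₁ ≤ (k₀+2)‖δ_{T₀}‖₂. -/
theorem stmt2 (p s : ℕ) (k0 : ℝ) (hs : 1 ≤ s) (hsp : 2 * s ≤ p) (hk0 : 0 < k0)
    (δ : Fin p → ℝ)
    (T0 : Finset (Fin p)) (hT0card : T0.card = s)
    (hT0max : ∀ i ∈ T0, ∀ j ∉ T0, |δ j| ≤ |δ i|)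
    (hcone : l1 (restr T0ᶜ δ) ≤ k0 * l1 (restr T0 δ)) :
    l2 δ ≤ l2 (restr T0 δ) + (Real.sqrt s)⁻¹ * l1 δ ∧
      l2 (restr T0 δ) + (Real.sqrt s)⁻¹ * l1 δ ≤ (k0 + 2) * l2 (restr T0 δ) := by
  set A := ∑ i ∈ T0, (δ i) ^ 2 with hA
  set B := ∑ i ∈ T0ᶜ, (δ i) ^ 2 with hB
  set L0 := ∑ i ∈ T0, |δ i| with hL0
  set Lc := ∑ i ∈ T0ᶜ, |δ i| with hLc
  have hAnn : 0 ≤ A := Finset.sum_nonneg fun i _ => sq_nonneg _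
  have hBnn : 0 ≤ B := Finset.sum_nonneg fun i _ => sq_nonneg _
  have hL0nn : 0 ≤ L0 := Finset.sum_nonneg fun i _ => abs_nonneg _
  have hLcnn : 0 ≤ Lc := Finset.sum_nonneg fun i _ => abs_nonneg _
  have hspos : (0:ℝ) < s := by exact_mod_cast hs
  have hsqs : (0:ℝ) < Real.sqrt s := Real.sqrt_pos.mpr hspos
  have hl1 : l1 δ = L0 + Lc := by
    unfold l1
    rw [← Finset.sum_add_sum_compl T0 (fun i => |δ i|)]
  have hl1nn : 0 ≤ l1 δ := by rw [hl1]; linarith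
  have hl2T : l2 (restr T0 δ) = Real.sqrt A := l2_restr T0 δ
  have hl2 : l2 δ = Real.sqrt (A + B) := by
    unfold l2
    rw [← Finset.sum_add_sum_compl T0 (fun i => (δ i) ^ 2)]
  -- each j ∉ T0 has |δ j| ≤ L0 / s
  have hsmall : ∀ j ∈ T0ᶜ, |δ j| ≤ L0 / s := by
    intro j hj
    rw [Finset.mem_compl] at hj
    rw [le_div_iff₀ hspos]
    calc |δ j| * s = ∑ _i ∈ T0, |δ j| := by
          rw [Finset.sum_const, hT0card, nsmul_eq_mul, mul_comm]
      _ ≤ L0 := Finset.sum_le_sum fun i hi => hT0max i hi j hj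
  have hL0le : L0 ≤ l1 δ := by rw [hl1]; linarith
  have hLcle : Lc ≤ l1 δ := by rw [hl1]; linarith
  -- B ≤ l1 δ ^ 2 / s
  have hBle : B ≤ l1 δ ^ 2 / s := by
    have h1 : B ≤ (L0 / s) * Lc := by
      rw [hB, hLc, Finset.mul_sum]
      refine Finset.sum_le_sum fun j hj => ?_
      have := hsmall j hj
      have habs : (0:ℝ) ≤ |δ j| := abs_nonneg _
      calc (δ j) ^ 2 = |δ j| * |δ j| := by rw [sq, ← abs_mul_abs_self]
        _ ≤ (L0 / s) * |δ j| := by apply mul_le_mul_of_nonneg_right this habs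
    calc B ≤ (L0 / s) * Lc := h1
      _ ≤ (l1 δ / s) * l1 δ := by
          apply mul_le_mul (by gcongr) hLcle hLcnn (by positivity)
      _ = l1 δ ^ 2 / s := by ring
  have hsqB : Real.sqrt B ≤ (Real.sqrt s)⁻¹ * l1 δ := by
    have h := Real.sqrt_le_sqrt hBle
    rw [Real.sqrt_div (sq_nonneg _), Real.sqrt_sq hl1nn, div_eq_inv_mul] at h
    exact h
  constructor
  · rw [hl2, hl2T]
    calc Real.sqrt (A + B) ≤ Real.sqrt A + Real.sqrt B := sqrt_add_le' A B hAnn hBnn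
      _ ≤ Real.sqrt A + (Real.sqrt s)⁻¹ * l1 δ := by linarith
  · -- Cauchy-Schwarz: L0 ≤ √s √A
    have hCS : L0 ^ 2 ≤ s * A := by
      have := sq_sum_le_card_mul_sum_sq (s := T0) (f := fun i => |δ i|)
      simp only [sq_abs] at this
      rw [hT0card] at this
      exact_mod_cast this
    have hL0A : L0 ≤ Real.sqrt s * Real.sqrt A := by
      have h2 : L0 ≤ Real.sqrt (s * A) := by
        rw [show Real.sqrt (s * A) = Real.sqrt (s * A) from rfl]
        calc L0 = Real.sqrt (L0 ^ 2) := (Real.sqrt_sq hL0nn).symm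
          _ ≤ Real.sqrt (s * A) := Real.sqrt_le_sqrt hCS
      rwa [Real.sqrt_mul (le_of_lt hspos)] at h2
    have hcone' : Lc ≤ k0 * L0 := by
      rw [l1_restr, l1_restr] at hcone
      exact hcone
    have : (Real.sqrt s)⁻¹ * l1 δ ≤ (k0 + 1) * Real.sqrt A := by
      rw [hl1]
      have h3 : L0 + Lc ≤ (k0 + 1) * L0 := by linarith
      have h4 : (Real.sqrt s)⁻¹ * (L0 + Lc) ≤ (Real.sqrt s)⁻¹ * ((k0 + 1) * L0) := by
        apply mul_le_mul_of_nonneg_left h3 (by positivity)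
      refine h4.trans ?_
      rw [← mul_assoc, mul_comm (Real.sqrt s)⁻¹ (k0 + 1), mul_assoc]
      apply mul_le_mul_of_nonneg_left _ (by linarith)
      rw [inv_mul_le_iff₀ hsqs]
      exact hL0A
    rw [hl2T]
    have hsA : 0 ≤ Real.sqrt A := Real.sqrt_nonneg A
    linarith
end

section
/- For every 0 < ε ≤ 1/2 and every 1 ≤ m ≤ p, there exists a set Π ⊂ B₂^p (the unit Euclidean ball of ℝ^p) which is an ε-cover of Ũ_m = {x ∈ B₂^p : |supp(x)| ≤ m} in the Euclidean metric, satisfying Ũ_m ⊂ 2·conv(Π) and |Π| ≤ (5/(2ε))^m · C(p,m). -/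
open Finset Metric Pointwise MeasureTheory

lemma pack (m : ℕ) (hm : 1 ≤ m) (ε : ℝ) (hε : 0 < ε) (N : Finset (EuclideanSpace ℝ (Fin m)))
    (hN : ∀ y ∈ N, ‖y‖ ≤ 1)
    (hsep : ∀ x ∈ N, ∀ y ∈ N, x ≠ y → ε ≤ dist x y) :
    (N.card : ℝ) ≤ (1 + 2/ε) ^ m := by
  haveI : Nonempty (Fin m) := ⟨⟨0, hm⟩⟩
  haveI : Nontrivial (EuclideanSpace ℝ (Fin m)) := inferInstance
  set μ : Measure (EuclideanSpace ℝ (Fin m)) := volume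
  have hdisj : (N : Set (EuclideanSpace ℝ (Fin m))).PairwiseDisjoint
      (fun y => ball y (ε/2)) := by
    intro x hx y hy hxy
    apply Set.disjoint_left.2
    intro z hzx hzy
    have := hsep x hx y hy hxy
    have : dist x y < ε := by
      calc dist x y ≤ dist x z + dist z y := dist_triangle x z y
      _ < ε/2 + ε/2 := by
          rw [dist_comm x z]
          exact add_lt_add (mem_ball.1 hzx) (by simpa [dist_comm] using mem_ball.1 hzy)
      _ = ε := by ring
    linarith [hsep x hx y hy hxy]
  have hmeas : μ (⋃ y ∈ N, ball y (ε/2)) = ∑ y ∈ N, μ (ball y (ε/2)) :=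
    measure_biUnion_finset hdisj (fun y _ => measurableSet_ball)
  have hsub : (⋃ y ∈ N, ball y (ε/2)) ⊆ ball (0 : EuclideanSpace ℝ (Fin m)) (1 + ε/2) := by
    intro z hz
    simp only [Set.mem_iUnion] at hz
    obtain ⟨y, hy, hzy⟩ := hz
    have : dist z (0 : EuclideanSpace ℝ (Fin m)) ≤ dist z y + dist y 0 := dist_triangle _ _ _
    have hy1 : dist y (0 : EuclideanSpace ℝ (Fin m)) ≤ 1 := by
      simpa [dist_zero_right] using hN y hy
    have := mem_ball.1 hzy
    rw [mem_ball]
    linarith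
  have key : (N.card : ENNReal) * μ (ball 0 (ε/2)) ≤ μ (ball 0 (1 + ε/2)) := by
    calc (N.card : ENNReal) * μ (ball 0 (ε/2))
        = ∑ y ∈ N, μ (ball y (ε/2)) := by
          rw [Finset.sum_congr rfl (fun y _ => Measure.addHaar_ball_center μ y (ε/2))]
          simp [Finset.sum_const, nsmul_eq_mul]
      _ = μ (⋃ y ∈ N, ball y (ε/2)) := hmeas.symm
      _ ≤ μ (ball 0 (1 + ε/2)) := measure_mono hsub
  rw [Measure.addHaar_ball _ _ (by positivity : (0:ℝ) ≤ ε/2),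
      Measure.addHaar_ball _ _ (by positivity : (0:ℝ) ≤ 1 + ε/2)] at key
  have hV0 : μ (ball (0 : EuclideanSpace ℝ (Fin m)) 1) ≠ 0 :=
    (measure_ball_pos μ 0 one_pos).ne'
  have hVt : μ (ball (0 : EuclideanSpace ℝ (Fin m)) 1) ≠ ⊤ := measure_ball_lt_top.ne
  rw [← mul_assoc, ENNReal.mul_le_mul_iff_left hV0 hVt] at key
  rw [← ENNReal.ofReal_natCast, ← ENNReal.ofReal_mul (by positivity),
      ENNReal.ofReal_le_ofReal_iff (by positivity)] at key
  rw [finrank_euclideanSpace_fin] at key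
  have h1 : (0:ℝ) < (ε/2) ^ m := by positivity
  rw [← le_div_iff₀ h1] at key
  have heq : (1 + ε/2) / (ε/2) = 1 + 2/ε := by field_simp; ring
  calc (N.card : ℝ) ≤ (1 + ε/2) ^ m / (ε/2) ^ m := key
    _ = ((1 + ε/2) / (ε/2)) ^ m := (div_pow _ _ _).symm
    _ = (1 + 2/ε) ^ m := by rw [heq]

lemma net (m : ℕ) (hm : 1 ≤ m) (ε : ℝ) (hε : 0 < ε) :
    ∃ N : Finset (EuclideanSpace ℝ (Fin m)),
      (0 : EuclideanSpace ℝ (Fin m)) ∈ N ∧ (∀ y ∈ N, ‖y‖ ≤ 1) ∧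
      (∀ x ∈ closedBall (0 : EuclideanSpace ℝ (Fin m)) 1, ∃ y ∈ N, dist x y ≤ ε) ∧
      (N.card : ℝ) ≤ (1 + 2/ε) ^ m := by
  classical
  set P : Finset (EuclideanSpace ℝ (Fin m)) → Prop := fun N =>
    (0 : EuclideanSpace ℝ (Fin m)) ∈ N ∧ (∀ y ∈ N, ‖y‖ ≤ 1) ∧
    (∀ x ∈ N, ∀ y ∈ N, x ≠ y → ε ≤ dist x y) with hP
  set s : Set ℕ := {n | ∃ N, P N ∧ N.card = n} with hs
  have hbd : ∀ n ∈ s, n ≤ ⌊(1 + 2/ε) ^ m⌋₊ := by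
    rintro n ⟨N, ⟨h0, h1, h2⟩, rfl⟩
    exact Nat.le_floor (pack m hm ε hε N h1 h2)
  have hne : s.Nonempty := by
    refine ⟨1, {0}, ⟨Finset.mem_singleton_self 0, ?_, ?_⟩, Finset.card_singleton 0⟩
    · intro y hy; rw [Finset.mem_singleton] at hy; simp [hy]
    · intro x hx y hy hxy
      rw [Finset.mem_singleton] at hx hy; exact absurd (hx.trans hy.symm) hxy
  have hbdd : BddAbove s := ⟨_, hbd⟩
  obtain ⟨N, hPN, hcard⟩ : sSup s ∈ s := Nat.sSup_mem hne hbdd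
  obtain ⟨h0, h1, h2⟩ := hPN
  refine ⟨N, h0, h1, ?_, ?_⟩
  · intro x hx
    by_contra hcon
    push_neg at hcon
    have hxN : x ∉ N := fun hxN => absurd (hcon x hxN) (by simp [hε.le])
    have : N.card + 1 ∈ s := by
      refine ⟨insert x N, ⟨Finset.mem_insert_of_mem h0, ?_, ?_⟩, by
        rw [Finset.card_insert_of_notMem hxN]⟩
      · intro y hy
        rcases Finset.mem_insert.1 hy with rfl | hy
        · simpa [dist_zero_right] using mem_closedBall.1 hx
        · exact h1 y hy
      · intro a ha b hb hab
        rcases Finset.mem_insert.1 ha with rfl | ha'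
        · rcases Finset.mem_insert.1 hb with rfl | hb'
          · exact absurd rfl hab
          · exact (hcon b hb').le
        · rcases Finset.mem_insert.1 hb with rfl | hb'
          · rw [dist_comm]; exact (hcon a ha').le
          · exact h2 a ha' b hb' hab
    have := le_csSup hbdd this
    omega
  · exact pack m hm ε hε N h1 h2

lemma iter_lemma {E : Type*} [NormedAddCommGroup E] [NormedSpace ℝ E]
    (F : Finset E) (U : Set E) (ε : ℝ) (hε : 0 < ε) (hε2 : ε ≤ 1/2)
    (hU1 : ∀ x ∈ U, ‖x‖ ≤ 1) (h0 : (0:E) ∈ F)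
    (hstar : ∀ x ∈ U, ∃ y ∈ F, ε⁻¹ • (x - y) ∈ U) :
    U ⊆ (2:ℝ) • (convexHull ℝ (F : Set E)) := by
  classical
  have hε1 : ε < 1 := lt_of_le_of_lt hε2 (by norm_num)
  have hεne : ε ≠ 1 := ne_of_lt hε1
  have hconv : Convex ℝ (convexHull ℝ (F : Set E)) := convex_convexHull ℝ _
  have hclosed : IsClosed (convexHull ℝ (F : Set E)) :=
    (F.finite_toSet.isCompact_convexHull ℝ).isClosed
  have h0' : (0:E) ∈ convexHull ℝ (F : Set E) := subset_convexHull ℝ _ h0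
  intro x hx
  set f : {z : E // z ∈ U} → E × {z : E // z ∈ U} := fun z =>
    ⟨(hstar z.1 z.2).choose, ⟨ε⁻¹ • (z.1 - (hstar z.1 z.2).choose),
      (hstar z.1 z.2).choose_spec.2⟩⟩ with hf
  set u : ℕ → {z : E // z ∈ U} := fun n => (fun z => (f z).2)^[n] ⟨x, hx⟩ with hu
  set y : ℕ → E := fun n => (f (u n)).1 with hy
  have hyF : ∀ n, y n ∈ F := fun n => (hstar (u n).1 (u n).2).choose_spec.1
  have hrec : ∀ n, ((u (n+1) : E)) = ε⁻¹ • ((u n : E) - y n) := by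
    intro n
    have : u (n+1) = (f (u n)).2 := by
      rw [hu]; exact Function.iterate_succ_apply' _ n _
    rw [this]
  have hstep : ∀ n, ((u n : E)) = y n + ε • ((u (n+1) : E)) := by
    intro n
    rw [hrec n, smul_inv_smul₀ hε.ne']
    abel
  have hsum : ∀ n, x = (∑ k ∈ Finset.range n, ε^k • y k) + ε^n • ((u n : E)) := by
    intro n
    induction n with
    | zero => simp [hu]
    | succ n ih =>
      rw [Finset.sum_range_succ]
      rw [ih, hstep n]
      rw [smul_add, smul_smul, ← pow_succ]
      abel
  set s : ℕ → E := fun n => ∑ k ∈ Finset.range n, ε^k • y k with hs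
  have htend : Filter.Tendsto s Filter.atTop (nhds x) := by
    rw [tendsto_iff_norm_sub_tendsto_zero]
    have hb : ∀ n, ‖s n - x‖ ≤ ε^n := by
      intro n
      have := hsum n
      have : s n - x = -(ε^n • ((u n : E))) := by rw [this]; abel
      rw [this, norm_neg, norm_smul, norm_pow, Real.norm_of_nonneg hε.le]
      calc ε^n * ‖((u n : E))‖ ≤ ε^n * 1 := by
            exact mul_le_mul_of_nonneg_left (hU1 _ (u n).2) (by positivity)
        _ = ε^n := mul_one _
    apply squeeze_zero (fun n => norm_nonneg _) hb
    exact tendsto_pow_atTop_nhds_zero_of_lt_one hε.le hε1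
  have hmem : ∀ n, (1-ε) • s n ∈ convexHull ℝ (F : Set E) := by
    intro n
    have heq : (1-ε) • s n = ∑ k ∈ Finset.range (n+1),
        (if k < n then (1-ε) * ε^k else ε^n) • (if k < n then y k else 0) := by
      rw [Finset.sum_range_succ]
      simp only [if_neg (lt_irrefl n), smul_zero, add_zero]
      rw [hs, Finset.smul_sum]
      apply Finset.sum_congr rfl
      intro k hk
      rw [if_pos (Finset.mem_range.1 hk), if_pos (Finset.mem_range.1 hk), smul_smul]
    rw [heq]
    apply hconv.sum_mem
    · intro k _
      split
      · have := pow_nonneg hε.le k; nlinarith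
      · positivity
    · rw [Finset.sum_range_succ, if_neg (lt_irrefl n)]
      have : ∀ k ∈ Finset.range n, (if k < n then (1-ε) * ε^k else ε^n) = (1-ε) * ε^k := by
        intro k hk; rw [if_pos (Finset.mem_range.1 hk)]
      rw [Finset.sum_congr rfl this, ← Finset.mul_sum, geom_sum_eq hεne]
      have h1ε : ε - 1 ≠ 0 := sub_ne_zero.2 hεne
      field_simp
      ring
    · intro k _
      split
      · exact subset_convexHull ℝ _ (hyF k)
      · exact h0'
  have hlim : (1-ε) • x ∈ convexHull ℝ (F : Set E) := by
    apply hclosed.mem_of_tendsto (htend.const_smul (1-ε))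
    exact Filter.Eventually.of_forall hmem
  have h2e : (1:ℝ) ≤ 2*(1-ε) := by linarith
  set t : ℝ := (2*(1-ε))⁻¹ with ht
  have ht0 : 0 ≤ t := by positivity
  have ht1 : t ≤ 1 := by
    rw [ht]; exact inv_le_one_of_one_le₀ h2e
  have hne' : (1:ℝ) - ε ≠ 0 := by linarith
  have hgt : (0:ℝ) < 2*(1-ε) := by linarith
  have htv : t * (1-ε) = 1/2 := by
    rw [ht, inv_mul_eq_div, div_eq_div_iff hgt.ne' two_ne_zero]
    ring
  have hhalf : (1/2 : ℝ) • x ∈ convexHull ℝ (F : Set E) := by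
    have h := hconv (a := t) (b := 1 - t) hlim h0' ht0 (by linarith) (by ring)
    rw [smul_zero, add_zero, smul_smul, htv] at h
    exact h
  exact Set.mem_smul_set.2 ⟨(1/2 : ℝ) • x, hhalf, by rw [smul_smul]; norm_num⟩

lemma perS (p m : ℕ) (hm : 1 ≤ m) (ε : ℝ) (hε : 0 < ε) (S : Finset (Fin p)) (hS : S.card = m) :
    ∃ F : Finset (EuclideanSpace ℝ (Fin p)),
      (0 : EuclideanSpace ℝ (Fin p)) ∈ F ∧
      (∀ y ∈ F, ‖y‖ ≤ 1 ∧ ∀ i, i ∉ S → y i = 0) ∧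
      (∀ x : EuclideanSpace ℝ (Fin p), ‖x‖ ≤ 1 → (∀ i, i ∉ S → x i = 0) →
        ∃ y ∈ F, dist x y ≤ ε) ∧
      (F.card : ℝ) ≤ (1 + 2/ε) ^ m := by
  classical
  obtain ⟨N, hN0, hN1, hNcov, hNcard⟩ := net m hm ε hε
  set e : {i // i ∈ S} ≃ Fin m := S.equivFin.trans (finCongr hS) with he
  set Φ : EuclideanSpace ℝ (Fin m) → EuclideanSpace ℝ (Fin p) := fun a =>
    WithLp.toLp 2 (fun i => if h : i ∈ S then a (e ⟨i, h⟩) else 0) with hΦ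
  have hiso : ∀ a b : EuclideanSpace ℝ (Fin m), dist (Φ a) (Φ b) = dist a b := by
    intro a b
    rw [EuclideanSpace.dist_eq, EuclideanSpace.dist_eq]
    congr 1
    have h1 : ∑ i : Fin p, dist (Φ a i) (Φ b i) ^ 2
        = ∑ i ∈ S, dist (Φ a i) (Φ b i) ^ 2 := by
      refine (Finset.sum_subset (Finset.subset_univ S) ?_).symm
      intro i _ hi
      simp [hΦ, dif_neg hi]
    have h2 : ∑ i ∈ S, dist (Φ a i) (Φ b i) ^ 2
        = ∑ i : {i // i ∈ S}, dist (a (e i)) (b (e i)) ^ 2 := by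
      rw [Finset.univ_eq_attach, ← Finset.sum_attach S (fun i => dist (Φ a i) (Φ b i) ^ 2)]
      apply Finset.sum_congr rfl
      intro i _
      simp [hΦ, dif_pos i.2]
    have h3 : ∑ i : {i // i ∈ S}, dist (a (e i)) (b (e i)) ^ 2
        = ∑ j : Fin m, dist (a j) (b j) ^ 2 :=
      Fintype.sum_equiv e _ _ (fun i => rfl)
    rw [h1, h2, h3]
  have hΦ0 : Φ 0 = 0 := by
    ext i
    simp only [hΦ]
    split <;> rfl
  have hnorm : ∀ a : EuclideanSpace ℝ (Fin m), ‖Φ a‖ = ‖a‖ := by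
    intro a
    rw [← dist_zero_right, ← dist_zero_right, ← hΦ0, hiso]
  refine ⟨N.image Φ, ?_, ?_, ?_, ?_⟩
  · rw [← hΦ0]; exact Finset.mem_image_of_mem Φ hN0
  · intro y hy
    obtain ⟨a, ha, rfl⟩ := Finset.mem_image.1 hy
    refine ⟨by rw [hnorm]; exact hN1 a ha, ?_⟩
    intro i hi
    simp [hΦ, dif_neg hi]
  · intro x hx hxs
    set a : EuclideanSpace ℝ (Fin m) := WithLp.toLp 2 (fun j => x ↑(e.symm j)) with ha
    have hΦa : Φ a = x := by
      ext i
      simp only [hΦ, ha]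
      split
      · next h => rw [Equiv.symm_apply_apply]
      · next h => exact (hxs i h).symm
    have haball : a ∈ closedBall (0 : EuclideanSpace ℝ (Fin m)) 1 := by
      rw [mem_closedBall_zero_iff, ← hnorm a, hΦa]; exact hx
    obtain ⟨y, hyN, hdy⟩ := hNcov a haball
    refine ⟨Φ y, Finset.mem_image_of_mem Φ hyN, ?_⟩
    rw [← hΦa, hiso]; exact hdy
  · calc ((N.image Φ).card : ℝ) ≤ (N.card : ℝ) := by
          exact_mod_cast Finset.card_image_le
      _ ≤ (1 + 2/ε) ^ m := hNcard


/-- For 0 < ε ≤ 1/2 and 1 ≤ m ≤ p, there is an ε-cover Pi ⊂ B₂^p of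
Ũ_m = {x ∈ B₂^p : |supp(x)| ≤ m} with Ũ_m ⊂ 2·conv(Pi) and |Pi| ≤ (5/(2ε))^m · C(p,m). -/
theorem stmt8 (p m : ℕ) (hm : 1 ≤ m) (hmp : m ≤ p) (ε : ℝ) (hε : 0 < ε) (hε2 : ε ≤ 1 / 2) :
    ∃ Pi : Finset (EuclideanSpace ℝ (Fin p)),
      (↑Pi : Set (EuclideanSpace ℝ (Fin p))) ⊆ closedBall 0 1 ∧
      (∀ x ∈ {x : EuclideanSpace ℝ (Fin p) |
          x ∈ closedBall (0 : EuclideanSpace ℝ (Fin p)) 1 ∧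
          {i | x i ≠ 0}.Finite ∧ {i | x i ≠ 0}.ncard ≤ m},
        ∃ y ∈ Pi, dist x y ≤ ε) ∧
      {x : EuclideanSpace ℝ (Fin p) |
          x ∈ closedBall (0 : EuclideanSpace ℝ (Fin p)) 1 ∧
          {i | x i ≠ 0}.Finite ∧ {i | x i ≠ 0}.ncard ≤ m} ⊆
        (2 : ℝ) • convexHull ℝ (↑Pi : Set (EuclideanSpace ℝ (Fin p))) ∧
      (Pi.card : ℝ) ≤ (5 / (2 * ε)) ^ m * (p.choose m : ℝ) := by
  classical
  set U : Set (EuclideanSpace ℝ (Fin p)) := {x : EuclideanSpace ℝ (Fin p) |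
      x ∈ closedBall (0 : EuclideanSpace ℝ (Fin p)) 1 ∧
      {i | x i ≠ 0}.Finite ∧ {i | x i ≠ 0}.ncard ≤ m} with hU
  set g : Finset (Fin p) → Finset (EuclideanSpace ℝ (Fin p)) := fun S =>
    if h : S.card = m then (perS p m hm ε hε S h).choose else ∅ with hg
  have hgspec : ∀ S : Finset (Fin p), (hS : S.card = m) →
      (0 : EuclideanSpace ℝ (Fin p)) ∈ g S ∧
      (∀ y ∈ g S, ‖y‖ ≤ 1 ∧ ∀ i, i ∉ S → y i = 0) ∧
      (∀ x : EuclideanSpace ℝ (Fin p), ‖x‖ ≤ 1 → (∀ i, i ∉ S → x i = 0) →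
        ∃ y ∈ g S, dist x y ≤ ε) ∧
      ((g S).card : ℝ) ≤ (1 + 2/ε) ^ m := by
    intro S hS
    rw [hg]
    simp only [dif_pos hS]
    exact (perS p m hm ε hε S hS).choose_spec
  set 𝒮 : Finset (Finset (Fin p)) := Finset.powersetCard m Finset.univ with h𝒮
  have hmem𝒮 : ∀ S ∈ 𝒮, S.card = m := by
    intro S hS
    exact (Finset.mem_powersetCard.1 hS).2
  set Pi : Finset (EuclideanSpace ℝ (Fin p)) := 𝒮.biUnion g with hPi
  -- pick some S₀ ∈ 𝒮
  obtain ⟨S₀, hS₀sub, hS₀card⟩ :=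
    Finset.exists_subset_card_eq (s := (Finset.univ : Finset (Fin p))) (n := m)
      (by rw [Finset.card_univ, Fintype.card_fin]; exact hmp)
  have hS₀𝒮 : S₀ ∈ 𝒮 := Finset.mem_powersetCard.2 ⟨hS₀sub, hS₀card⟩
  have h0Pi : (0 : EuclideanSpace ℝ (Fin p)) ∈ Pi :=
    Finset.mem_biUnion.2 ⟨S₀, hS₀𝒮, (hgspec S₀ hS₀card).1⟩
  -- the key per-point fact
  have hkey : ∀ x ∈ U, ∃ y ∈ Pi, dist x y ≤ ε ∧ ε⁻¹ • (x - y) ∈ U := by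
    rintro x ⟨hxb, hxfin, hxcard⟩
    set T : Finset (Fin p) := hxfin.toFinset with hT
    have hTcard : T.card ≤ m := by
      rw [hT, ← Set.ncard_eq_toFinset_card _ hxfin]; exact hxcard
    obtain ⟨S, hTS, hSu, hScard⟩ := Finset.exists_subsuperset_card_eq
      (T.subset_univ) hTcard (by rw [Finset.card_univ, Fintype.card_fin]; exact hmp)
    have hS𝒮 : S ∈ 𝒮 := Finset.mem_powersetCard.2 ⟨hSu, hScard⟩
    obtain ⟨h0g, hg1, hgcov, _⟩ := hgspec S hScard
    have hxsupp : ∀ i, i ∉ S → x i = 0 := by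
      intro i hi
      by_contra hne
      exact hi (hTS (by rw [hT, Set.Finite.mem_toFinset]; exact hne))
    obtain ⟨y, hyg, hdy⟩ := hgcov x (by rwa [← mem_closedBall_zero_iff]) hxsupp
    refine ⟨y, Finset.mem_biUnion.2 ⟨S, hS𝒮, hyg⟩, hdy, ?_, ?_, ?_⟩
    · rw [mem_closedBall_zero_iff, norm_smul, Real.norm_eq_abs, abs_of_pos (by positivity)]
      have : ‖x - y‖ ≤ ε := by rwa [← dist_eq_norm]
      calc ε⁻¹ * ‖x - y‖ ≤ ε⁻¹ * ε := by
            exact mul_le_mul_of_nonneg_left this (by positivity)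
        _ = 1 := inv_mul_cancel₀ hε.ne'
    · have hsub : {i | (ε⁻¹ • (x - y)) i ≠ 0} ⊆ (S : Set (Fin p)) := by
        intro i hi
        by_contra hiS
        apply hi
        have hxi : x i = 0 := hxsupp i hiS
        have hyi : y i = 0 := (hg1 y hyg).2 i hiS
        simp [PiLp.smul_apply, PiLp.sub_apply, hxi, hyi]
      exact Set.Finite.subset S.finite_toSet hsub
    · have hsub : {i | (ε⁻¹ • (x - y)) i ≠ 0} ⊆ (S : Set (Fin p)) := by
        intro i hi
        by_contra hiS
        apply hi
        have hxi : x i = 0 := hxsupp i hiS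
        have hyi : y i = 0 := (hg1 y hyg).2 i hiS
        simp [PiLp.smul_apply, PiLp.sub_apply, hxi, hyi]
      calc {i | (ε⁻¹ • (x - y)) i ≠ 0}.ncard ≤ (S : Set (Fin p)).ncard :=
            Set.ncard_le_ncard hsub S.finite_toSet
        _ = S.card := Set.ncard_coe_finset S
        _ = m := hScard
  refine ⟨Pi, ?_, ?_, ?_, ?_⟩
  · intro y hy
    obtain ⟨S, hS, hyg⟩ := Finset.mem_biUnion.1 hy
    rw [mem_closedBall_zero_iff]
    exact ((hgspec S (hmem𝒮 S hS)).2.1 y hyg).1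
  · intro x hx
    obtain ⟨y, hy, hdy, _⟩ := hkey x hx
    exact ⟨y, hy, hdy⟩
  · apply iter_lemma Pi U ε hε hε2
    · intro x hx
      rw [← mem_closedBall_zero_iff]; exact hx.1
    · exact h0Pi
    · intro x hx
      obtain ⟨y, hy, _, hz⟩ := hkey x hx
      exact ⟨y, hy, hz⟩
  · calc (Pi.card : ℝ) ≤ ∑ S ∈ 𝒮, ((g S).card : ℝ) := by
          exact_mod_cast Finset.card_biUnion_le
      _ ≤ ∑ S ∈ 𝒮, (1 + 2/ε) ^ m := by
          apply Finset.sum_le_sum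
          intro S hS
          exact (hgspec S (hmem𝒮 S hS)).2.2.2
      _ = (𝒮.card : ℝ) * (1 + 2/ε) ^ m := by
          rw [Finset.sum_const, nsmul_eq_mul]
      _ = (p.choose m : ℝ) * (1 + 2/ε) ^ m := by
          rw [h𝒮, Finset.card_powersetCard, Finset.card_univ, Fintype.card_fin]
      _ ≤ (p.choose m : ℝ) * (5 / (2*ε)) ^ m := by
          apply mul_le_mul_of_nonneg_left _ (Nat.cast_nonneg _)
          apply pow_le_pow_left₀ (by positivity)
          rw [le_div_iff₀ (by positivity)]
          have hεne : ε ≠ 0 := hε.ne'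
          have heq : (1 + 2/ε) * (2*ε) = 2*ε + 4 := by field_simp; ring
          rw [heq]; linarith
      _ = (5 / (2*ε)) ^ m * (p.choose m : ℝ) := mul_comm _ _
end

section
/- Suppose the RE condition RE(s,k₀,Σ) holds with k₀ ≥ 1 for a p×p matrix Σ with Σ_{ii} = 1. Then every principal submatrix of Σ of size at most 2s is positive definite; equivalently, for every t ∈ ℝ^p with t ≠ 0 and |supp(t)| ≤ 2s, one has ‖Σ^{1/2}t‖₂ > 0. -/
open Finset

lemma l2_nonneg {p : ℕ} (v : Fin p → ℝ) : 0 ≤ l2 v := Real.sqrt_nonneg _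

lemma l2_pos_of_l1_pos {p : ℕ} (v : Fin p → ℝ) (h : 0 < l1 v) : 0 < l2 v := by
  have : ∃ i, v i ≠ 0 := by
    by_contra hc
    push_neg at hc
    have : l1 v = 0 := by
      unfold l1; exact Finset.sum_eq_zero fun i _ => by rw [hc i, abs_zero]
    linarith
  obtain ⟨i, hi⟩ := this
  have h1 : (0:ℝ) < (v i)^2 := by positivity
  have h2 : (v i)^2 ≤ ∑ j, (v j)^2 :=
    Finset.single_le_sum (fun j _ => sq_nonneg (v j)) (Finset.mem_univ i)
  exact Real.sqrt_pos.mpr (lt_of_lt_of_le h1 h2)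

/-- if RE(s,k₀,Σ) holds with k₀ ≥ 1, then ‖Σ^{1/2}t‖₂ > 0 for every
nonzero t with |supp(t)| ≤ 2s (equivalently, all principal submatrices of Σ of
size ≤ 2s are positive definite). -/
theorem stmt19 (p s : ℕ) (hs : 1 ≤ s) (hsp : 2 * s ≤ p) (k0 : ℝ) (hk0 : 1 ≤ k0)
    (Sig R : Matrix (Fin p) (Fin p) ℝ)
    (hpsd : Sig.PosSemidef) (hdiag : ∀ i, Sig i i = 1)
    (hRpsd : R.PosSemidef) (hRsq : R * R = Sig)
    (K : ℝ) (hK : 0 < K)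
    -- RE(s,k₀,Σ) with constant K
    (hRE : ∀ J0 : Finset (Fin p), J0.card ≤ s → ∀ v : Fin p → ℝ, v ≠ 0 →
      l1 (restr J0ᶜ v) ≤ k0 * l1 (restr J0 v) → l2 (restr J0 v) ≤ K * l2 (R.mulVec v)) :
    ∀ t : Fin p → ℝ, t ≠ 0 → (Finset.univ.filter fun i => t i ≠ 0).card ≤ 2 * s →
      0 < l2 (R.mulVec t) := by
  intro t ht hcard
  set T : Finset (Fin p) := Finset.univ.filter (fun i => t i ≠ 0) with hTdef
  have hT : ∀ i, i ∉ T → t i = 0 := by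
    intro i hi
    by_contra hne
    exact hi (by simp [hTdef, hne])
  -- split T into A and B := T \ A, each of card ≤ s
  obtain ⟨A, hAsub, hAcard⟩ := Finset.exists_subset_card_eq (min_le_right s T.card)
  set B : Finset (Fin p) := T \ A with hBdef
  have hA_le : A.card ≤ s := by rw [hAcard]; exact min_le_left _ _
  have hB_le : B.card ≤ s := by
    have h1 : B.card = T.card - A.card := Finset.card_sdiff_of_subset hAsub
    have h2 : T.card ≤ 2 * s := hcard
    omega
  have hdisjAB : Disjoint A B := Finset.disjoint_sdiff
  have hunion : A ∪ B = T := Finset.union_sdiff_of_subset hAsub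
  -- key step, applied to whichever half has larger ℓ1 mass
  have key : ∀ J0 O : Finset (Fin p), J0.card ≤ s → Disjoint J0 O → J0 ∪ O = T →
      l1 (restr O t) ≤ l1 (restr J0 t) → 0 < l2 (R.mulVec t) := by
    intro J0 O hJ0 hdisj hun hle
    -- pointwise: restr J0ᶜ t = restr O t
    have heq : restr J0ᶜ t = restr O t := by
      funext i
      unfold restr
      by_cases hiJ : i ∈ J0
      · have hiO : i ∉ O := Finset.disjoint_left.mp hdisj hiJ
        simp [hiJ, hiO]
      · by_cases hiO : i ∈ O
        · simp [hiJ, hiO]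
        · have hiT : i ∉ T := by rw [← hun]; simp [hiJ, hiO]
          simp [hiJ, hiO, hT i hiT]
    have h1 : l1 (restr J0ᶜ t) ≤ k0 * l1 (restr J0 t) := by
      rw [heq]
      calc l1 (restr O t) ≤ l1 (restr J0 t) := hle
        _ ≤ k0 * l1 (restr J0 t) := le_mul_of_one_le_left (l1_nonneg _) hk0
    have hRE' := hRE J0 hJ0 t ht h1
    -- l1 t = l1 (restr J0 t) + l1 (restr O t)
    have hsplit : l1 t = l1 (restr J0 t) + l1 (restr O t) := by
      unfold l1
      rw [← Finset.sum_add_distrib]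
      apply Finset.sum_congr rfl
      intro i _
      unfold restr
      by_cases hiJ : i ∈ J0
      · have hiO : i ∉ O := Finset.disjoint_left.mp hdisj hiJ
        simp [hiJ, hiO]
      · by_cases hiO : i ∈ O
        · simp [hiJ, hiO]
        · have hiT : i ∉ T := by rw [← hun]; simp [hiJ, hiO]
          simp [hiJ, hiO, hT i hiT]
    have hl1t : 0 < l1 t := by
      obtain ⟨i, hi⟩ := Function.ne_iff.mp ht
      have h1 : (0:ℝ) < |t i| := abs_pos.mpr hi
      have h2 : |t i| ≤ l1 t :=
        Finset.single_le_sum (fun j _ => abs_nonneg (t j)) (Finset.mem_univ i)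
      linarith
    have hJ0pos : 0 < l1 (restr J0 t) := by linarith
    have hl2pos : 0 < l2 (restr J0 t) := l2_pos_of_l1_pos _ hJ0pos
    have hfin : 0 < K * l2 (R.mulVec t) := lt_of_lt_of_le hl2pos hRE'
    nlinarith [l2_nonneg (R.mulVec t)]
  rcases le_total (l1 (restr B t)) (l1 (restr A t)) with h | h
  · exact key A B hA_le hdisjAB hunion h
  · exact key B A hB_le hdisjAB.symm (by rw [Finset.union_comm]; exact hunion) h
end
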